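/- arXiv:2101.03053 — 2 statements merged into one kernel-verified Lean document; each statement's English description precedes it below -/
import Mathlib

section
/- Suppose a vector v satisfies Πᵀv = v and Π(α²M + αD + K)Πᵀv = ΠFb. Then there exists a vector Λ ∈ ℝ^{n₂} such that (α²M + αD + K)v + GᵀΛ = Fb and Gv = 0. -/
open Matrix

theorem projected_implies_saddle_point
    {n1 n2 m : ℕ} (M D K : Matrix (Fin n1) (Fin n1) ℝ) (G : Matrix (Fin n2) (Fin n1) ℝ)
    (F : Matrix (Fin n1) (Fin m) ℝ) (b : Fin m → ℝ) (α : ℝ)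
    (hM : IsUnit M.det) (hG : IsUnit (G * M⁻¹ * Gᵀ).det)
    (P : Matrix (Fin n1) (Fin n1) ℝ)
    (hP : P = 1 - Gᵀ * (G * M⁻¹ * Gᵀ)⁻¹ * G * M⁻¹)
    (v : Fin n1 → ℝ)
    (h1 : Pᵀ.mulVec v = v)
    (h2 : (P * (α ^ 2 • M + α • D + K) * Pᵀ).mulVec v = (P * F).mulVec b) :
    ∃ Λ : Fin n2 → ℝ,
      (α ^ 2 • M + α • D + K).mulVec v + Gᵀ.mulVec Λ = F.mulVec b ∧ G.mulVec v = 0 := by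
  set A : Matrix (Fin n1) (Fin n1) ℝ := α ^ 2 • M + α • D + K with hA
  set S : Matrix (Fin n2) (Fin n2) ℝ := G * M⁻¹ * Gᵀ with hS
  set Q : Matrix (Fin n1) (Fin n1) ℝ := Gᵀ * S⁻¹ * G * M⁻¹ with hQ
  have hSinv : S⁻¹ * S = 1 := Matrix.nonsing_inv_mul _ hG
  have hQG : Q * Gᵀ = Gᵀ := by
    have h : Q * Gᵀ = Gᵀ * (S⁻¹ * S) := by rw [hQ, hS]; simp only [Matrix.mul_assoc]
    rw [h, hSinv, Matrix.mul_one]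
  have hGQ : G * Qᵀ = G := by
    have h := congrArg Matrix.transpose hQG
    simpa [Matrix.transpose_mul] using h
  -- From h1 get Qᵀ v = 0
  have hQt : Qᵀ.mulVec v = 0 := by
    have hPt : Pᵀ = 1 - Qᵀ := by
      rw [hP, Matrix.transpose_sub, Matrix.transpose_one, hQ]
    have h' := h1
    rw [hPt, Matrix.sub_mulVec, Matrix.one_mulVec] at h'
    exact sub_eq_self.mp h'
  have hGv : G.mulVec v = 0 := by
    calc G.mulVec v = (G * Qᵀ).mulVec v := by rw [hGQ]
    _ = G.mulVec (Qᵀ.mulVec v) := (Matrix.mulVec_mulVec ..).symm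
    _ = 0 := by rw [hQt, Matrix.mulVec_zero]
  -- From h2 get (P*A) v = (P*F) b
  have h2' : A.mulVec v - Q.mulVec (A.mulVec v) =
      F.mulVec b - Q.mulVec (F.mulVec b) := by
    have h' : (P * A).mulVec v = (P * F).mulVec b := by
      have := h2
      rwa [← Matrix.mulVec_mulVec, h1] at this
    rw [hP] at h'
    have e1 : ((1 - Q) * A).mulVec v = A.mulVec v - Q.mulVec (A.mulVec v) := by
      rw [Matrix.sub_mul, Matrix.one_mul, Matrix.sub_mulVec, Matrix.mulVec_mulVec]
    have e2 : ((1 - Q) * F).mulVec b = F.mulVec b - Q.mulVec (F.mulVec b) := by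
      rw [Matrix.sub_mul, Matrix.one_mul, Matrix.sub_mulVec, Matrix.mulVec_mulVec]
    rw [← e1, ← e2]
    exact h'
  refine ⟨-(S⁻¹ * G * M⁻¹).mulVec (A.mulVec v - F.mulVec b), ?_, hGv⟩
  have hQeq : Gᵀ.mulVec ((S⁻¹ * G * M⁻¹).mulVec (A.mulVec v - F.mulVec b))
      = Q.mulVec (A.mulVec v - F.mulVec b) := by
    simp only [Matrix.mulVec_mulVec, hQ, Matrix.mul_assoc]
  have hfix : Q.mulVec (A.mulVec v - F.mulVec b) = A.mulVec v - F.mulVec b := by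
    rw [Matrix.mulVec_sub]
    linear_combination -h2'
  rw [Matrix.mulVec_neg, hQeq, hfix]
  abel
end

section
/- A vector pair (v, Λ) satisfies the saddle-point system (α²M + αD + K)v + GᵀΛ = Fb and Gv = 0 if and only if v satisfies Πᵀv = v and Π(α²M + αD + K)Πᵀv = ΠFb. Moreover, in that case, Λ is uniquely determined by v. -/
open Matrix

theorem saddle_point_iff_projected_and_unique_multiplier
    {n1 n2 m : ℕ} (M D K : Matrix (Fin n1) (Fin n1) ℝ) (G : Matrix (Fin n2) (Fin n1) ℝ)
    (F : Matrix (Fin n1) (Fin m) ℝ) (b : Fin m → ℝ) (α : ℝ)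
    (hM : IsUnit M.det) (hG : IsUnit (G * M⁻¹ * Gᵀ).det) (hGG : IsUnit (G * Gᵀ).det)
    (P : Matrix (Fin n1) (Fin n1) ℝ)
    (hP : P = 1 - Gᵀ * (G * M⁻¹ * Gᵀ)⁻¹ * G * M⁻¹)
    (v : Fin n1 → ℝ) :
    ((∃ Λ : Fin n2 → ℝ,
        (α ^ 2 • M + α • D + K).mulVec v + Gᵀ.mulVec Λ = F.mulVec b ∧ G.mulVec v = 0) ↔
      (Pᵀ.mulVec v = v ∧
        (P * (α ^ 2 • M + α • D + K) * Pᵀ).mulVec v = (P * F).mulVec b)) ∧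
    (∀ Λ Λ' : Fin n2 → ℝ,
      ((α ^ 2 • M + α • D + K).mulVec v + Gᵀ.mulVec Λ = F.mulVec b ∧ G.mulVec v = 0) →
      ((α ^ 2 • M + α • D + K).mulVec v + Gᵀ.mulVec Λ' = F.mulVec b ∧ G.mulVec v = 0) →
      Λ = Λ') := by
  set S := G * M⁻¹ * Gᵀ with hSdef
  set A := α ^ 2 • M + α • D + K with hA
  have hS' : S⁻¹ * S = 1 := Matrix.nonsing_inv_mul _ hG
  have hST : IsUnit Sᵀ.det := by rwa [Matrix.det_transpose]
  have hMT : IsUnit Mᵀ.det := by rwa [Matrix.det_transpose]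
  -- cancellation for invertible square matrices acting on vectors
  have cancel : ∀ {k : ℕ} (B : Matrix (Fin k) (Fin k) ℝ), IsUnit B.det →
      ∀ x y : Fin k → ℝ, B.mulVec x = B.mulVec y → x = y := by
    intro k B hB x y hxy
    have h2 := congrArg (B⁻¹.mulVec) hxy
    simpa [Matrix.mulVec_mulVec, Matrix.nonsing_inv_mul B hB] using h2
  -- key: P * Gᵀ = 0
  have key : Gᵀ * S⁻¹ * G * M⁻¹ * Gᵀ = Gᵀ := by
    rw [Matrix.mul_assoc (Gᵀ * S⁻¹ * G), Matrix.mul_assoc (Gᵀ * S⁻¹),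
      ← Matrix.mul_assoc G, ← hSdef, Matrix.mul_assoc Gᵀ, hS', Matrix.mul_one]
  have hPG : P * Gᵀ = 0 := by
    rw [hP, Matrix.sub_mul, Matrix.one_mul, key, sub_self]
  -- transpose of P
  have hPT : Pᵀ = 1 - M⁻¹ᵀ * (Gᵀ * (S⁻¹ᵀ * G)) := by
    rw [hP]
    simp [Matrix.transpose_sub, Matrix.transpose_mul, Matrix.mul_assoc]
  -- G v = 0 → Pᵀ v = v
  have h1 : ∀ w : Fin n1 → ℝ, G.mulVec w = 0 → Pᵀ.mulVec w = w := by
    intro w hw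
    rw [hPT, Matrix.sub_mulVec, Matrix.one_mulVec]
    have hz : (M⁻¹ᵀ * (Gᵀ * (S⁻¹ᵀ * G))).mulVec w = 0 := by
      rw [← Matrix.mulVec_mulVec, ← Matrix.mulVec_mulVec, ← Matrix.mulVec_mulVec, hw]
      simp
    rw [hz, sub_zero]
  -- Pᵀ v = v → G v = 0
  have h2 : Pᵀ.mulVec v = v → G.mulVec v = 0 := by
    intro hv
    rw [hPT, Matrix.sub_mulVec, Matrix.one_mulVec, sub_eq_self] at hv
    rw [← Matrix.mulVec_mulVec, ← Matrix.mulVec_mulVec, ← Matrix.mulVec_mulVec] at hv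
    -- hv : M⁻¹ᵀ.mulVec (Gᵀ.mulVec (S⁻¹ᵀ.mulVec (G.mulVec v))) = 0
    set w := S⁻¹ᵀ.mulVec (G.mulVec v) with hw
    have hMv : M⁻¹ᵀ = Mᵀ⁻¹ := (Matrix.transpose_nonsing_inv M)
    have hGTw : Gᵀ.mulVec w = 0 := by
      apply cancel Mᵀ⁻¹ (by simpa [Matrix.det_nonsing_inv] using hMT.inv)
      · rw [← hMv, hv]; simp
    have hw0 : w = 0 := by
      apply cancel (G * Gᵀ) hGG
      rw [← Matrix.mulVec_mulVec, hGTw]; simp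
    have : G.mulVec v = Sᵀ.mulVec w := by
      rw [hw, Matrix.mulVec_mulVec]
      have : Sᵀ * S⁻¹ᵀ = 1 := by
        rw [Matrix.transpose_nonsing_inv, Matrix.mul_nonsing_inv _ hST]
      rw [this, Matrix.one_mulVec]
    rw [this, hw0, Matrix.mulVec_zero]
  constructor
  · constructor
    · rintro ⟨Λ, heq, hGv⟩
      have hPv : Pᵀ.mulVec v = v := h1 v hGv
      refine ⟨hPv, ?_⟩
      have := congrArg P.mulVec heq
      rw [Matrix.mulVec_add, Matrix.mulVec_mulVec Λ P Gᵀ, hPG,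
        Matrix.zero_mulVec, add_zero, Matrix.mulVec_mulVec, Matrix.mulVec_mulVec] at this
      rw [← Matrix.mulVec_mulVec v (P * A) Pᵀ, hPv, this]
    · rintro ⟨hPv, hproj⟩
      have hGv : G.mulVec v = 0 := h2 hPv
      refine ⟨(S⁻¹ * G * M⁻¹).mulVec (F.mulVec b - A.mulVec v), ?_, hGv⟩
      have hPr : P.mulVec (F.mulVec b - A.mulVec v) = 0 := by
        rw [Matrix.mulVec_sub]
        have hAv : (P * A).mulVec v = (P * F).mulVec b := by
          rw [← hproj, ← Matrix.mulVec_mulVec v (P * A) Pᵀ, hPv]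
        rw [Matrix.mulVec_mulVec, ← hAv, ← Matrix.mulVec_mulVec, sub_self]
      have hGΛ : Gᵀ.mulVec ((S⁻¹ * G * M⁻¹).mulVec (F.mulVec b - A.mulVec v))
          = F.mulVec b - A.mulVec v := by
        rw [Matrix.mulVec_mulVec]
        have h1mP : Gᵀ * (S⁻¹ * G * M⁻¹) = 1 - P := by
          rw [hP, sub_sub_cancel]; simp [Matrix.mul_assoc]
        rw [h1mP, Matrix.sub_mulVec, Matrix.one_mulVec, hPr, sub_zero]
      rw [hGΛ]; abel
  · rintro Λ Λ' ⟨heq1, -⟩ ⟨heq2, -⟩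
    have hGT : Gᵀ.mulVec Λ = Gᵀ.mulVec Λ' := by
      have := heq1.trans heq2.symm
      exact add_left_cancel this
    apply cancel (G * Gᵀ) hGG
    rw [← Matrix.mulVec_mulVec, ← Matrix.mulVec_mulVec, hGT]
end
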